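/- For the randomized Gauss-Seidel scheme in which at each step a uniformly random coordinate i ∈ {1,…,N} of the error vector y ∈ ℝ^N is replaced so that the new i-th squared entry is at most δ²·Σⱼ W_ij y_j² (others unchanged), the conditional expected squared norm contracts: E[‖y⁺‖² | y] ≤ (1 − (1/N)(1 − δ²))·‖y‖². -/

import Mathlib

/-- one step of the randomized Gauss-Seidel scheme, where a uniformly
random coordinate is replaced, contracts the expected squared norm by the factor
`1 − (1/N)(1 − δ²)`. -/
theorem randomized_gauss_seidel_expected_contraction
    {N : ℕ} (hN : 0 < N) (W : Matrix (Fin N) (Fin N) ℝ)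
    (hsymm : W.IsSymm) (hnonneg : ∀ i j, 0 ≤ W i j)
    (hrow : ∀ i, ∑ j, W i j = 1)
    (δ : ℝ) (hδ0 : 0 ≤ δ) (hδ1 : δ < 1)
    (y : Fin N → ℝ)
    (yplus : Fin N → (Fin N → ℝ))  -- `yplus i` is the new vector when index `i` is picked
    (hupdate : ∀ i, (yplus i i) ^ 2 ≤ δ ^ 2 * ∑ j, W i j * (y j) ^ 2)
    (hrest : ∀ i j, j ≠ i → yplus i j = y j) :
    (1 / (N : ℝ)) * ∑ i, ∑ j, (yplus i j) ^ 2 ≤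
      (1 - (1 / (N : ℝ)) * (1 - δ ^ 2)) * ∑ j, (y j) ^ 2 := by
  set S := ∑ j, (y j) ^ 2 with hS
  have hcol : ∀ j, ∑ i, W i j = 1 := by
    intro j
    have : ∀ i, W i j = W j i := fun i => (Matrix.IsSymm.apply hsymm j i)
    simp only [this]
    exact hrow j
  have hstep : ∀ i, ∑ j, (yplus i j) ^ 2 ≤
      δ ^ 2 * (∑ j, W i j * (y j) ^ 2) + (S - (y i) ^ 2) := by
    intro i
    have h1 : ∑ j, (yplus i j) ^ 2
        = (yplus i i) ^ 2 + ∑ j ∈ Finset.univ.erase i, (yplus i j) ^ 2 := by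
      rw [← Finset.add_sum_erase _ _ (Finset.mem_univ i)]
    have h2 : ∑ j ∈ Finset.univ.erase i, (yplus i j) ^ 2
        = ∑ j ∈ Finset.univ.erase i, (y j) ^ 2 := by
      apply Finset.sum_congr rfl
      intro j hj
      rw [hrest i j (Finset.ne_of_mem_erase hj)]
    have h3 : ∑ j ∈ Finset.univ.erase i, (y j) ^ 2 = S - (y i) ^ 2 := by
      rw [hS, ← Finset.add_sum_erase _ _ (Finset.mem_univ i)]
      ring
    rw [h1, h2, h3]
    exact add_le_add_left (hupdate i) _
  have htot : ∑ i, ∑ j, (yplus i j) ^ 2 ≤ δ ^ 2 * S + (N : ℝ) * S - S := by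
    calc ∑ i, ∑ j, (yplus i j) ^ 2
        ≤ ∑ i, (δ ^ 2 * (∑ j, W i j * (y j) ^ 2) + (S - (y i) ^ 2)) :=
          Finset.sum_le_sum fun i _ => hstep i
      _ = δ ^ 2 * (∑ i, ∑ j, W i j * (y j) ^ 2) + ((N : ℝ) * S - S) := by
          rw [Finset.sum_add_distrib, ← Finset.mul_sum, Finset.sum_sub_distrib]
          simp [hS, mul_comm]
      _ = δ ^ 2 * S + (N : ℝ) * S - S := by
          rw [Finset.sum_comm]
          have : ∑ j, ∑ i, W i j * (y j) ^ 2 = S := by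
            rw [hS]
            apply Finset.sum_congr rfl
            intro j _
            rw [← Finset.sum_mul, hcol j, one_mul]
          rw [this]; ring
  have hNpos : (0 : ℝ) < N := by exact_mod_cast hN
  have hfinal : (1 / (N : ℝ)) * (δ ^ 2 * S + (N : ℝ) * S - S)
      = (1 - (1 / (N : ℝ)) * (1 - δ ^ 2)) * S := by
    field_simp
    ring
  calc (1 / (N : ℝ)) * ∑ i, ∑ j, (yplus i j) ^ 2
      ≤ (1 / (N : ℝ)) * (δ ^ 2 * S + (N : ℝ) * S - S) := by
        apply mul_le_mul_of_nonneg_left htot (by positivity)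
    _ = (1 - (1 / (N : ℝ)) * (1 - δ ^ 2)) * S := hfinal
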